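/- Let V ∈ ℝ^{k×r}, Σ ∈ ℝ^{r×r}, and g ~ N(0, I_r). Define the random vector v ∈ ℝ^k with entries V_ℓ = exp(e_ℓ^T V Σ g) / Σ_{j∈[k]} exp(e_j^T V Σ g) (the softmax of VΣg), and set π = E[v] ∈ ℝ^k and Π = E[v v^T] ∈ ℝ^{k×k}. Then E[v g^T] = (diag(π) − Π) · V Σ. -/

import Mathlib

open MeasureTheory ProbabilityTheory

/-- The softmax function on `ℝ^k`. -/
noncomputable def softmax (k : ℕ) (x : Fin k → ℝ) (ℓ : Fin k) : ℝ :=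
  Real.exp (x ℓ) / ∑ j, Real.exp (x j)

section Softmax

variable {k : ℕ}

lemma sum_exp_pos (hk : 0 < k) (x : Fin k → ℝ) : 0 < ∑ j, Real.exp (x j) := by
  have : Nonempty (Fin k) := ⟨⟨0, hk⟩⟩
  exact Finset.sum_pos (fun j _ => Real.exp_pos _) Finset.univ_nonempty

lemma softmax_nonneg (hk : 0 < k) (x : Fin k → ℝ) (ℓ : Fin k) : 0 ≤ softmax k x ℓ :=
  div_nonneg (Real.exp_pos _).le (sum_exp_pos hk x).le

lemma softmax_le_one (hk : 0 < k) (x : Fin k → ℝ) (ℓ : Fin k) : softmax k x ℓ ≤ 1 := by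
  rw [softmax, div_le_one (sum_exp_pos hk x)]
  exact Finset.single_le_sum (fun j _ => (Real.exp_pos (x j)).le) (Finset.mem_univ ℓ)

lemma abs_softmax_le_one (hk : 0 < k) (x : Fin k → ℝ) (ℓ : Fin k) : |softmax k x ℓ| ≤ 1 := by
  rw [abs_of_nonneg (softmax_nonneg hk x ℓ)]
  exact softmax_le_one hk x ℓ

lemma continuous_softmax_comp {X : Type*} [TopologicalSpace X] (hk : 0 < k)
    {u : X → Fin k → ℝ} (hu : Continuous u) (ℓ : Fin k) :
    Continuous fun x => softmax k (u x) ℓ := by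
  apply Continuous.div
  · exact Real.continuous_exp.comp ((continuous_apply ℓ).comp hu)
  · exact continuous_finset_sum _ fun j _ =>
      Real.continuous_exp.comp ((continuous_apply j).comp hu)
  · exact fun x => (sum_exp_pos hk (u x)).ne'

lemma hasDerivAt_softmax_affine (hk : 0 < k) (a c : Fin k → ℝ) (ℓ : Fin k) (t : ℝ) :
    HasDerivAt (fun s => softmax k (fun j => a j * s + c j) ℓ)
      (softmax k (fun j => a j * t + c j) ℓ *
        (a ℓ - ∑ j, softmax k (fun j' => a j' * t + c j') j * a j)) t := by
  have hN : ∀ m : Fin k, HasDerivAt (fun s => Real.exp (a m * s + c m))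
      (a m * Real.exp (a m * t + c m)) t := by
    intro m
    have h1 : HasDerivAt (fun s => a m * s + c m) (a m) t := by
      simpa using ((hasDerivAt_id t).const_mul (a m)).add_const (c m)
    have := h1.exp
    convert this using 1
    ring
  have hD : HasDerivAt (fun s => ∑ j, Real.exp (a j * s + c j))
      (∑ j, a j * Real.exp (a j * t + c j)) t :=
    HasDerivAt.fun_sum fun j _ => hN j
  have hDpos : (0:ℝ) < ∑ j, Real.exp (a j * t + c j) := sum_exp_pos hk _
  have h := (hN ℓ).div hD hDpos.ne'
  refine h.congr_deriv (Eq.symm ?_)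
  rw [softmax]
  set D := ∑ j, Real.exp (a j * t + c j) with hDdef
  rw [eq_div_iff (by positivity : (D ^ 2 : ℝ) ≠ 0)]
  have hexp : ∀ j : Fin k, softmax k (fun j' => a j' * t + c j') j
      = Real.exp (a j * t + c j) / D := fun j => rfl
  simp only [hexp]
  have hsum : (∑ j, Real.exp (a j * t + c j) / D * a j)
      = (∑ j, a j * Real.exp (a j * t + c j)) / D := by
    rw [Finset.sum_div]
    congr 1
    ext j
    ring
  rw [hsum]
  field_simp

lemma softmax_deriv_bound (hk : 0 < k) (a : Fin k → ℝ) (x : Fin k → ℝ) (ℓ : Fin k) :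
    |softmax k x ℓ * (a ℓ - ∑ j, softmax k x j * a j)| ≤ |a ℓ| + ∑ j, |a j| := by
  rw [abs_mul]
  have h1 : |softmax k x ℓ| ≤ 1 := abs_softmax_le_one hk x ℓ
  have h2 : |a ℓ - ∑ j, softmax k x j * a j| ≤ |a ℓ| + ∑ j, |a j| := by
    refine (abs_sub _ _).trans ?_
    gcongr
    refine (Finset.abs_sum_le_sum_abs _ _).trans ?_
    apply Finset.sum_le_sum
    intro j _
    rw [abs_mul]
    calc |softmax k x j| * |a j| ≤ 1 * |a j| :=
          mul_le_mul_of_nonneg_right (abs_softmax_le_one hk x j) (abs_nonneg _)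
    _ = |a j| := one_mul _
  calc |softmax k x ℓ| * |a ℓ - ∑ j, softmax k x j * a j|
      ≤ 1 * (|a ℓ| + ∑ j, |a j|) := by
        apply mul_le_mul h1 h2 (abs_nonneg _) one_pos.le
  _ = |a ℓ| + ∑ j, |a j| := one_mul _

end Softmax

section SteinAux

open Real Filter Set
open scoped ENNReal NNReal


noncomputable def gφ (t : ℝ) : ℝ := (Real.sqrt (2 * Real.pi))⁻¹ * Real.exp (-t ^ 2 / 2)

lemma gφ_eq : gaussianPDFReal 0 1 = gφ := by
  ext t
  simp [gaussianPDFReal, gφ]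

lemma gφ_pos (t : ℝ) : 0 < gφ t := by
  have : (0:ℝ) < Real.sqrt (2 * Real.pi) := Real.sqrt_pos.2 (by positivity)
  unfold gφ; positivity

lemma gaussianReal_eq_withDensity :
    gaussianReal 0 1 = volume.withDensity (fun t => ENNReal.ofReal (gφ t)) := by
  rw [gaussianReal_of_var_ne_zero _ one_ne_zero]
  congr 1
  ext t
  rw [gaussianPDF, gφ_eq]

lemma integral_gaussian_eq (g : ℝ → ℝ) :
    ∫ t, g t ∂(gaussianReal 0 1) = ∫ t, gφ t * g t := by
  rw [gaussianReal_eq_withDensity]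
  have hm : Measurable fun t => (gφ t).toNNReal := by
    rw [← gφ_eq]; exact (measurable_gaussianPDFReal 0 1).real_toNNReal
  have h1 : (fun t => ENNReal.ofReal (gφ t)) = fun t => ((gφ t).toNNReal : ℝ≥0∞) := rfl
  rw [h1, integral_withDensity_eq_integral_smul hm]
  congr 1
  ext t
  simp [NNReal.smul_def, Real.coe_toNNReal _ (gφ_pos t).le]

lemma integrable_gaussian_iff (g : ℝ → ℝ) :
    Integrable g (gaussianReal 0 1) ↔ Integrable (fun t => gφ t * g t) volume := by
  rw [gaussianReal_eq_withDensity]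
  have hm : Measurable fun t => (gφ t).toNNReal := by
    rw [← gφ_eq]; exact (measurable_gaussianPDFReal 0 1).real_toNNReal
  have h1 : (fun t => ENNReal.ofReal (gφ t)) = fun t => ((gφ t).toNNReal : ℝ≥0∞) := rfl
  rw [h1, integrable_withDensity_iff_integrable_smul hm]
  apply integrable_congr
  refine ae_of_all _ fun t => ?_
  simp [NNReal.smul_def, Real.coe_toNNReal _ (gφ_pos t).le]

lemma integrable_abs_mul_gφ : Integrable (fun t => |t| * Real.exp (-t ^ 2 / 2)) volume := by
  have h := (integrable_rpow_mul_exp_neg_mul_sq (b := 1/2) (by norm_num) (s := 1)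
    (by norm_num)).abs
  apply h.congr
  refine ae_of_all _ fun t => ?_
  simp only [Real.rpow_one, abs_mul, abs_of_pos (Real.exp_pos _)]
  congr 1
  ring_nf

lemma integrable_linear_gφ (C C' : ℝ) :
    Integrable (fun t => (C + C' * |t|) * gφ t) volume := by
  have h1 : Integrable (fun t => Real.exp (-t ^ 2 / 2)) volume := by
    have := integrable_exp_neg_mul_sq (b := 1/2) (by norm_num)
    apply this.congr
    refine ae_of_all _ fun t => ?_
    ring_nf
  have h2 := integrable_abs_mul_gφ
  have := ((h1.const_mul C).add (h2.const_mul C')).const_mul (Real.sqrt (2 * Real.pi))⁻¹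
  apply this.congr
  refine ae_of_all _ fun t => ?_
  simp only [Pi.add_apply]
  unfold gφ
  ring_nf

lemma gφ_hasDerivAt (t : ℝ) : HasDerivAt gφ (-t * gφ t) t := by
  have hu : HasDerivAt (fun t : ℝ => -t ^ 2 / 2) (-t) t := by
    have h := ((hasDerivAt_pow 2 t).neg).div_const 2
    refine h.congr_deriv (Eq.symm ?_)
    push_cast
    ring
  have h2 := (hu.exp).const_mul (Real.sqrt (2 * Real.pi))⁻¹
  refine h2.congr_deriv (Eq.symm ?_)
  unfold gφ
  ring

lemma gφ_continuous : Continuous gφ := by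
  unfold gφ
  fun_prop

lemma tendsto_gφ_atTop : Tendsto gφ atTop (nhds 0) := by
  have h1 : Tendsto (fun t : ℝ => -t ^ 2 / 2) atTop atBot := by
    apply Tendsto.atBot_div_const (by norm_num)
    exact tendsto_neg_atBot_iff.mpr (tendsto_pow_atTop two_ne_zero)
  have h := (Real.tendsto_exp_atBot.comp h1).const_mul (Real.sqrt (2 * Real.pi))⁻¹
  have h0 : ((Real.sqrt (2 * Real.pi))⁻¹ : ℝ) * 0 = 0 := by ring
  rw [h0] at h
  exact h

lemma tendsto_gφ_atBot : Tendsto gφ atBot (nhds 0) := by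
  have h := tendsto_gφ_atTop.comp tendsto_neg_atBot_atTop
  apply h.congr
  intro t
  show gφ (-t) = gφ t
  unfold gφ
  ring_nf

/-- 1-dimensional Stein identity / Gaussian integration by parts. -/
lemma stein (f f' : ℝ → ℝ) (hd : ∀ t, HasDerivAt f (f' t) t) (hc' : Continuous f')
    {C C' : ℝ} (hb : ∀ t, |f t| ≤ C) (hb' : ∀ t, |f' t| ≤ C') :
    ∫ t, f t * t ∂(gaussianReal 0 1) = ∫ t, f' t ∂(gaussianReal 0 1) := by
  have hC : 0 ≤ C := le_trans (abs_nonneg _) (hb 0)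
  have hfc : Continuous f := by
    rw [continuous_iff_continuousAt]
    exact fun t => (hd t).continuousAt
  set g : ℝ → ℝ := fun t => f t * gφ t with hg_def
  set g' : ℝ → ℝ := fun t => f' t * gφ t - t * f t * gφ t with hg'_def
  have hg : ∀ t, HasDerivAt g (g' t) t := by
    intro t
    have h := (hd t).mul (gφ_hasDerivAt t)
    refine h.congr_deriv (Eq.symm ?_)
    simp only [hg'_def]
    ring
  have hg'c : Continuous g' :=
    ((hc'.mul gφ_continuous).sub ((continuous_id.mul hfc).mul gφ_continuous))
  have hbound : ∀ t, ‖g' t‖ ≤ (C' + C * |t|) * gφ t := by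
    intro t
    simp only [hg'_def, Real.norm_eq_abs]
    have h1 : |f' t * gφ t - t * f t * gφ t| ≤ |f' t| * gφ t + |t| * |f t| * gφ t := by
      calc |f' t * gφ t - t * f t * gφ t| ≤ |f' t * gφ t| + |t * f t * gφ t| := abs_sub _ _
      _ = |f' t| * gφ t + |t| * |f t| * gφ t := by
          rw [abs_mul, abs_mul, abs_mul, abs_of_pos (gφ_pos t)]
    refine h1.trans ?_
    have h2 : |f' t| * gφ t ≤ C' * gφ t :=
      mul_le_mul_of_nonneg_right (hb' t) (gφ_pos t).le
    have h3 : |t| * |f t| * gφ t ≤ |t| * C * gφ t := by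
      have := mul_le_mul_of_nonneg_left (hb t) (abs_nonneg t)
      exact mul_le_mul_of_nonneg_right this (gφ_pos t).le
    nlinarith [gφ_pos t, abs_nonneg t]
  have hgi' : Integrable g' volume := by
    refine Integrable.mono' (integrable_linear_gφ C' C) hg'c.aestronglyMeasurable ?_
    exact ae_of_all _ hbound
  have htop : Tendsto g atTop (nhds 0) := by
    apply squeeze_zero_norm (fun t => ?_) (by simpa using tendsto_gφ_atTop.const_mul C)
    simp only [hg_def, Real.norm_eq_abs, abs_mul, abs_of_pos (gφ_pos t)]
    exact mul_le_mul_of_nonneg_right (hb t) (gφ_pos t).le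
  have hbot : Tendsto g atBot (nhds 0) := by
    apply squeeze_zero_norm (fun t => ?_) (by simpa using tendsto_gφ_atBot.const_mul C)
    simp only [hg_def, Real.norm_eq_abs, abs_mul, abs_of_pos (gφ_pos t)]
    exact mul_le_mul_of_nonneg_right (hb t) (gφ_pos t).le
  have hzero : ∫ t, g' t = 0 := by
    rw [integral_of_hasDerivAt_of_tendsto hg hgi' hbot htop]
    ring
  have h2 : Integrable (fun t => f' t * gφ t) volume := by
    refine Integrable.mono' (integrable_linear_gφ C' 0) (hc'.mul gφ_continuous).aestronglyMeasurable
      (ae_of_all _ fun t => ?_)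
    simp only [Real.norm_eq_abs, abs_mul, abs_of_pos (gφ_pos t), zero_mul, add_zero]
    exact mul_le_mul_of_nonneg_right (hb' t) (gφ_pos t).le
  have h3 : Integrable (fun t => t * f t * gφ t) volume := by
    have := h2.sub hgi'
    apply this.congr
    refine ae_of_all _ fun t => ?_
    simp only [hg'_def, Pi.sub_apply]
    ring
  have hsub : ∫ t, g' t = (∫ t, f' t * gφ t) - ∫ t, t * f t * gφ t := by
    simp only [hg'_def]
    exact integral_sub h2 h3
  have key : (∫ t, f' t * gφ t) = ∫ t, t * f t * gφ t := by
    have := hsub.symm.trans hzero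
    linarith [this]
  rw [integral_gaussian_eq, integral_gaussian_eq]
  rw [show (fun t => gφ t * (f t * t)) = fun t => t * f t * gφ t from by ext t; ring,
      show (fun t => gφ t * f' t) = fun t => f' t * gφ t from by ext t; ring]
  exact key.symm

end SteinAux

/-- Let `V ∈ ℝ^{k×r}`, `Σ ∈ ℝ^{r×r}` and `g ~ N(0, I_r)`.
Let `v = softmax (V Σ g)`, `π = E[v]` and `Π = E[v vᵀ]`.
Then `E[v gᵀ] = (diag π − Π) V Σ`, entrywise:
`E[v_ℓ g_i] = ((diag π − Π) V Σ)_{ℓ i}`. -/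
theorem softmax_gaussian_correlation
    (k r : ℕ) (hk : 0 < k)
    (V : Matrix (Fin k) (Fin r) ℝ) (S : Matrix (Fin r) (Fin r) ℝ)
    (π : Fin k → ℝ) (Pim : Matrix (Fin k) (Fin k) ℝ)
    (hπ : ∀ ℓ, π ℓ =
      ∫ x, softmax k ((V * S).mulVec x) ℓ ∂(Measure.pi fun _ : Fin r => gaussianReal 0 1))
    (hPi : ∀ ℓ j, Pim ℓ j =
      ∫ x, softmax k ((V * S).mulVec x) ℓ * softmax k ((V * S).mulVec x) j
        ∂(Measure.pi fun _ : Fin r => gaussianReal 0 1)) :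
    ∀ (ℓ : Fin k) (i : Fin r),
      (∫ x, softmax k ((V * S).mulVec x) ℓ * x i
          ∂(Measure.pi fun _ : Fin r => gaussianReal 0 1)) =
        ((Matrix.diagonal π - Pim) * (V * S)) ℓ i := by
  intro ℓ i
  cases r with
  | zero => exact i.elim0
  | succ n =>
  set M : Matrix (Fin k) (Fin (n+1)) ℝ := V * S with hM
  set γ : Measure ℝ := gaussianReal 0 1 with hγ
  set μ : Measure (Fin (n+1) → ℝ) := Measure.pi fun _ => γ with hμ
  set ν : Measure (Fin n → ℝ) := Measure.pi fun _ => γ with hν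
  -- basic continuity
  have hmvc : Continuous fun x : Fin (n+1) → ℝ => M.mulVec x := by
    apply continuous_pi
    intro j
    simp only [Matrix.mulVec, dotProduct]
    exact continuous_finset_sum _ fun m _ => continuous_const.mul (continuous_apply m)
  have hsc : ∀ m : Fin k, Continuous fun x : Fin (n+1) → ℝ => softmax k (M.mulVec x) m :=
    fun m => continuous_softmax_comp hk hmvc m
  -- the coefficient vector and the "derivative" function
  set a : Fin k → ℝ := fun j => M j i with ha
  set Gd : (Fin (n+1) → ℝ) → ℝ := fun x =>
    softmax k (M.mulVec x) ℓ * (a ℓ - ∑ j, softmax k (M.mulVec x) j * a j) with hGd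
  have hGdc : Continuous Gd := by
    apply (hsc ℓ).mul
    apply continuous_const.sub
    exact continuous_finset_sum _ fun j _ => (hsc j).mul continuous_const
  set Ca : ℝ := |a ℓ| + ∑ j, |a j| with hCa
  have hGdb : ∀ x, |Gd x| ≤ Ca := fun x => softmax_deriv_bound hk a (M.mulVec x) ℓ
  -- measure-preserving equivalence
  set e := MeasurableEquiv.piFinSuccAbove (fun _ : Fin (n+1) => ℝ) i with he_def
  have mp : MeasurePreserving e μ (γ.prod ν) :=
    MeasureTheory.measurePreserving_piFinSuccAbove (fun _ => γ) i
  have mp2 : MeasurePreserving e.symm (γ.prod ν) μ := mp.symm e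
  have he : ∀ (t : ℝ) (y : Fin n → ℝ), e.symm (t, y) = i.insertNth t y := fun t y => rfl
  have hei : ∀ (t : ℝ) (y : Fin n → ℝ), e.symm (t, y) i = t := by
    intro t y
    rw [he]
    simp
  -- mulVec of insertNth is affine in t
  have hmv : ∀ (t : ℝ) (y : Fin n → ℝ) (j : Fin k),
      M.mulVec (i.insertNth t y) j = a j * t + ∑ m, M j (i.succAbove m) * y m := by
    intro t y j
    simp only [Matrix.mulVec, dotProduct]
    rw [Fin.sum_univ_succAbove _ i]
    simp [mul_comm, ha]
  -- Stein identity applied fiberwise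
  have hstein : ∀ y : Fin n → ℝ,
      (∫ t, softmax k (M.mulVec (i.insertNth t y)) ℓ * t ∂γ)
        = ∫ t, Gd (i.insertNth t y) ∂γ := by
    intro y
    set c : Fin k → ℝ := fun j => ∑ m, M j (i.succAbove m) * y m with hc
    have hfun : ∀ t : ℝ, M.mulVec (i.insertNth t y) = fun j => a j * t + c j := by
      intro t; funext j; exact hmv t y j
    have hu : Continuous fun t : ℝ => (fun j => a j * t + c j : Fin k → ℝ) :=
      continuous_pi fun j => (continuous_const.mul continuous_id).add continuous_const
    set f : ℝ → ℝ := fun t => softmax k (fun j => a j * t + c j) ℓ with hf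
    set f' : ℝ → ℝ := fun t => softmax k (fun j => a j * t + c j) ℓ *
      (a ℓ - ∑ j, softmax k (fun j' => a j' * t + c j') j * a j) with hf'
    have hd : ∀ t, HasDerivAt f (f' t) t := fun t => hasDerivAt_softmax_affine hk a c ℓ t
    have hc' : Continuous f' := by
      apply (continuous_softmax_comp hk hu ℓ).mul
      apply continuous_const.sub
      exact continuous_finset_sum _ fun j _ => (continuous_softmax_comp hk hu j).mul continuous_const
    have hb : ∀ t, |f t| ≤ 1 := fun t => abs_softmax_le_one hk _ ℓ
    have hb' : ∀ t, |f' t| ≤ Ca := fun t => softmax_deriv_bound hk a _ ℓ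
    have h1 : (fun t => softmax k (M.mulVec (i.insertNth t y)) ℓ * t) = fun t => f t * t := by
      funext t; rw [hfun t]
    have h2 : (fun t => Gd (i.insertNth t y)) = f' := by
      funext t
      simp only [hGd, hf']
      rw [hfun t]
    rw [h1, h2, hγ]
    exact stein f f' hd hc' hb hb'
  -- integrability on the product space
  have hI1 : Integrable (fun t : ℝ => t) γ := by
    rw [hγ, integrable_gaussian_iff]
    refine Integrable.mono' (integrable_linear_gφ 0 1)
      (gφ_continuous.mul continuous_id).aestronglyMeasurable (ae_of_all _ fun t => ?_)
    rw [Real.norm_eq_abs, abs_mul, abs_of_pos (gφ_pos t)]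
    nlinarith [gφ_pos t, abs_nonneg t]
  have hprod1 : Integrable (fun p : ℝ × (Fin n → ℝ) => p.1) (γ.prod ν) := by
    have := hI1.mul_prod (integrable_const (1:ℝ) (μ := ν))
    simpa using this
  have hA : Integrable (fun p : ℝ × (Fin n → ℝ) =>
      softmax k (M.mulVec (e.symm p)) ℓ * (e.symm p) i) (γ.prod ν) := by
    refine Integrable.mono' hprod1.abs
      ((((hsc ℓ).measurable.comp e.symm.measurable).mul
        ((measurable_pi_apply i).comp e.symm.measurable)).aestronglyMeasurable)
      (ae_of_all _ fun p => ?_)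
    rw [Real.norm_eq_abs, abs_mul]
    have h1 : |softmax k (M.mulVec (e.symm p)) ℓ| ≤ 1 := abs_softmax_le_one hk _ ℓ
    calc |softmax k (M.mulVec (e.symm p)) ℓ| * |(e.symm p) i| ≤ 1 * |(e.symm p) i| :=
          mul_le_mul_of_nonneg_right h1 (abs_nonneg _)
    _ = |(e.symm p) i| := one_mul _
    _ = |p.1| := by rw [hei p.1 p.2]
  have hB : Integrable (fun p : ℝ × (Fin n → ℝ) => Gd (e.symm p)) (γ.prod ν) := by
    refine Integrable.mono' (integrable_const Ca)
      ((hGdc.measurable.comp e.symm.measurable).aestronglyMeasurable)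
      (ae_of_all _ fun p => hGdb _)
  -- transfer to the product space and back
  have step1 : (∫ x, softmax k (M.mulVec x) ℓ * x i ∂μ)
      = ∫ y, ∫ t, softmax k (M.mulVec (e.symm (t, y))) ℓ * (e.symm (t, y)) i ∂γ ∂ν := by
    rw [← mp2.integral_comp e.symm.measurableEmbedding
      (fun x => softmax k (M.mulVec x) ℓ * x i)]
    exact MeasureTheory.integral_prod_symm _ hA
  have step2 : (∫ y, ∫ t, softmax k (M.mulVec (e.symm (t, y))) ℓ * (e.symm (t, y)) i ∂γ ∂ν)
      = ∫ y, ∫ t, Gd (e.symm (t, y)) ∂γ ∂ν := by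
    apply integral_congr_ae
    refine ae_of_all _ fun y => ?_
    have hh : (fun t => softmax k (M.mulVec (e.symm (t, y))) ℓ * (e.symm (t, y)) i)
        = fun t => softmax k (M.mulVec (i.insertNth t y)) ℓ * t := by
      funext t
      rw [hei t y, he t y]
    dsimp only
    rw [hh, hstein y]
    apply integral_congr_ae
    refine ae_of_all _ fun t => ?_
    dsimp only
    rw [he t y]
  have step3 : (∫ y, ∫ t, Gd (e.symm (t, y)) ∂γ ∂ν) = ∫ x, Gd x ∂μ := by
    rw [← MeasureTheory.integral_prod_symm _ hB]
    exact mp2.integral_comp e.symm.measurableEmbedding Gd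
  -- compute ∫ Gd
  have hIs : ∀ m : Fin k, Integrable (fun x => softmax k (M.mulVec x) m) μ := by
    intro m
    refine Integrable.mono' (integrable_const (1:ℝ)) (hsc m).aestronglyMeasurable
      (ae_of_all _ fun x => ?_)
    exact abs_softmax_le_one hk _ m
  have hIss : ∀ j : Fin k, Integrable
      (fun x => softmax k (M.mulVec x) ℓ * softmax k (M.mulVec x) j) μ := by
    intro j
    refine Integrable.mono' (integrable_const (1:ℝ))
      ((hsc ℓ).mul (hsc j)).aestronglyMeasurable (ae_of_all _ fun x => ?_)
    rw [Real.norm_eq_abs, abs_mul]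
    calc |softmax k (M.mulVec x) ℓ| * |softmax k (M.mulVec x) j| ≤ 1 * 1 := by
          apply mul_le_mul (abs_softmax_le_one hk _ ℓ) (abs_softmax_le_one hk _ j)
            (abs_nonneg _) one_pos.le
    _ = 1 := one_mul 1
  have hGd_expand : Gd = fun x => a ℓ * softmax k (M.mulVec x) ℓ -
      ∑ j, a j * (softmax k (M.mulVec x) ℓ * softmax k (M.mulVec x) j) := by
    funext x
    simp only [hGd]
    rw [mul_sub, Finset.mul_sum]
    congr 1
    · ring
    · congr 1; ext j; ring
  have step4 : (∫ x, Gd x ∂μ) = a ℓ * π ℓ - ∑ j, a j * Pim ℓ j := by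
    rw [hGd_expand]
    rw [integral_sub ((hIs ℓ).const_mul (a ℓ))
      (integrable_finset_sum _ fun j _ => (hIss j).const_mul (a j))]
    rw [integral_finset_sum _ fun j _ => (hIss j).const_mul (a j)]
    rw [MeasureTheory.integral_const_mul]
    rw [← hπ ℓ]
    congr 1
    apply Finset.sum_congr rfl
    intro j _
    rw [MeasureTheory.integral_const_mul, ← hPi ℓ j]
  -- final algebra
  rw [step1, step2, step3, step4]
  rw [Matrix.mul_apply]
  have hdiag : ∀ j : Fin k, (Matrix.diagonal π - Pim) ℓ j * M j i
      = (if j = ℓ then π ℓ * M j i else 0) - Pim ℓ j * M j i := by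
    intro j
    rw [Matrix.sub_apply, Matrix.diagonal_apply]
    by_cases h : ℓ = j
    · subst h
      simp [sub_mul]
    · simp [h, Ne.symm h]
  simp only [hdiag]
  rw [Finset.sum_sub_distrib]
  rw [Finset.sum_ite_eq' Finset.univ ℓ (fun j => π ℓ * M j i)]
  simp only [Finset.mem_univ, if_true]
  rw [ha]
  congr 1
  · ring
  · apply Finset.sum_congr rfl
    intro j _
    ring
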